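/- Let φ₀ : Γ̃ → G have conjugation-stabilizer exactly Z(G), and suppose there exist g ∈ G and t ∈ Z(G) with φ₀ ∘ Ad_c = Ad_g ∘ φ₀ and g² φ₀(c²)⁻¹ = t². Then φ₀ extends to a homomorphism φ : Γ → G with φ|_{Γ̃} = φ₀ and φ(c) = g t⁻¹. In particular, if the obstruction class [g² φ₀(c²)⁻¹] ∈ Z(G)/2Z(G) is trivial, φ₀ extends to Γ. -/

import Mathlib

theorem indexTwoNormal {Γ : Type*} [Group Γ] (H : Subgroup Γ) (h : H.index = 2) :
    H.Normal := by
  constructor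
  intro n hn g
  rw [Subgroup.mul_mem_iff_of_index_two h, Subgroup.mul_mem_iff_of_index_two h, inv_mem_iff]
  simp [hn]

/-- The automorphism `Ad_c : x ↦ c x c⁻¹` of an index-two (hence normal) subgroup. -/
def adSub {Γ : Type*} [Group Γ] (H : Subgroup Γ) (h : H.index = 2) (c : Γ) : H →* H where
  toFun x := ⟨c * x * c⁻¹, (indexTwoNormal H h).conj_mem x x.2 c⟩
  map_one' := by ext; simp
  map_mul' x y := by ext; first | simp [mul_assoc] | (simp only [Subgroup.coe_mul, MulMemClass.coe_mul]; group)

/-- If `φ₀ : Γ̃ → G` has conjugation-stabilizer `Z(G)`,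
`φ₀ ∘ Ad_c = Ad_g ∘ φ₀`, and the obstruction `g² φ₀(c²)⁻¹` is a square `t²` of a central
element, then `φ₀` extends to a homomorphism `φ : Γ → G` with `φ(c) = g t⁻¹`. -/
theorem extension_of_trivial_obstruction {Γ G : Type*} [Group Γ] [Group G] (H : Subgroup Γ)
    (h2 : H.index = 2) (c : Γ) (hc : c ∉ H) (φ₀ : H →* G) (g t : G)
    (hZ : ∀ h : G, (∀ x : H, h * φ₀ x * h⁻¹ = φ₀ x) ↔ h ∈ Subgroup.center G)
    (hg : ∀ x : H, φ₀ (adSub H h2 c x) = g * φ₀ x * g⁻¹)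
    (ht : t ∈ Subgroup.center G)
    (hobs : g ^ 2 * (φ₀ ⟨c ^ 2, Subgroup.sq_mem_of_index_two h2 c⟩)⁻¹ = t ^ 2) :
    ∃ φ : Γ →* G, (∀ (x : Γ) (hx : x ∈ H), φ x = φ₀ ⟨x, hx⟩) ∧ φ c = g * t⁻¹ := by
  classical
  set b : G := g * t⁻¹ with hb
  have htc : ∀ u : G, t * u = u * t := fun u => (Subgroup.mem_center_iff.mp ht u).symm
  have ci : ∀ u : G, t⁻¹ * u = u * t⁻¹ := by
    intro u
    calc t⁻¹ * u = t⁻¹ * (u * t) * t⁻¹ := by group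
      _ = t⁻¹ * (t * u) * t⁻¹ := by rw [← htc u]
      _ = u * t⁻¹ := by group
  have hφmul : ∀ (a a' : Γ) (ha : a ∈ H) (ha' : a' ∈ H),
      φ₀ ⟨a * a', mul_mem ha ha'⟩ = φ₀ ⟨a, ha⟩ * φ₀ ⟨a', ha'⟩ :=
    fun a a' ha ha' => φ₀.map_mul ⟨a, ha⟩ ⟨a', ha'⟩
  have hφcongr : ∀ (a a' : Γ) (ha : a ∈ H) (ha' : a' ∈ H), a = a' →
      φ₀ ⟨a, ha⟩ = φ₀ ⟨a', ha'⟩ := by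
    intro a a' ha ha' h; subst h; rfl
  -- key conjugation fact for b
  have hconj : ∀ (y : Γ) (hy : y ∈ H),
      b * φ₀ ⟨y, hy⟩ = φ₀ ⟨c * y * c⁻¹, (indexTwoNormal H h2).conj_mem y hy c⟩ * b := by
    intro y hy
    have key := hg ⟨y, hy⟩
    simp only [adSub, MonoidHom.coe_mk, OneHom.coe_mk] at key
    rw [hb, key, mul_assoc g t⁻¹, ci (φ₀ ⟨y, hy⟩)]
    group
  -- b squared
  have hbsq : b * b = φ₀ ⟨c ^ 2, Subgroup.sq_mem_of_index_two h2 c⟩ := by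
    set X : G := φ₀ ⟨c ^ 2, Subgroup.sq_mem_of_index_two h2 c⟩ with hX
    have hg2 : g * g = t * t * X := by
      rw [← pow_two, ← pow_two, ← hobs]; group
    calc b * b = g * (t⁻¹ * g) * t⁻¹ := by rw [hb]; group
      _ = g * (g * t⁻¹) * t⁻¹ := by rw [ci g]
      _ = g * g * (t⁻¹ * t⁻¹) := by group
      _ = t * t * X * (t⁻¹ * t⁻¹) := by rw [hg2]
      _ = t * (t * X) * (t⁻¹ * t⁻¹) := by group
      _ = t * (X * t) * (t⁻¹ * t⁻¹) := by rw [htc X]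
      _ = X * t * t * (t⁻¹ * t⁻¹) := by rw [← mul_assoc t X t, htc X]
      _ = X := by group
  have hcinv : c⁻¹ ∉ H := fun h => hc (by simpa using inv_mem h)
  have hmemc : ∀ x : Γ, x ∉ H → x * c⁻¹ ∈ H := by
    intro x hx
    rw [Subgroup.mul_mem_iff_of_index_two h2]
    exact ⟨fun h => absurd h hx, fun h => absurd h hcinv⟩
  -- the extension as a raw function
  set f : Γ → G := fun x => if hx : x ∈ H then φ₀ ⟨x, hx⟩
    else φ₀ ⟨x * c⁻¹, hmemc x hx⟩ * b with hf
  have fmem : ∀ (x : Γ) (hx : x ∈ H), f x = φ₀ ⟨x, hx⟩ := by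
    intro x hx; simp only [hf, dif_pos hx]
  have fnmem : ∀ (x : Γ) (hx : x ∉ H), f x = φ₀ ⟨x * c⁻¹, hmemc x hx⟩ * b := by
    intro x hx; simp only [hf, dif_neg hx]
  have fmul : ∀ x y : Γ, f (x * y) = f x * f y := by
    intro x y
    by_cases hx : x ∈ H <;> by_cases hy : y ∈ H
    · have hxy : x * y ∈ H := mul_mem hx hy
      rw [fmem _ hxy, fmem _ hx, fmem _ hy, ← hφmul]
    · have hxy : x * y ∉ H := fun h => hy (by simpa using mul_mem (inv_mem hx) h)
      calc f (x * y) = φ₀ ⟨x * y * c⁻¹, hmemc _ hxy⟩ * b := fnmem _ hxy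
        _ = φ₀ ⟨x * (y * c⁻¹), mul_mem hx (hmemc y hy)⟩ * b :=
            congrArg (· * b) (hφcongr _ _ _ _ (by group))
        _ = φ₀ ⟨x, hx⟩ * φ₀ ⟨y * c⁻¹, hmemc y hy⟩ * b :=
            congrArg (· * b) (hφmul x (y * c⁻¹) hx (hmemc y hy))
        _ = φ₀ ⟨x, hx⟩ * (φ₀ ⟨y * c⁻¹, hmemc y hy⟩ * b) := mul_assoc _ _ _
        _ = f x * f y := by rw [fmem _ hx, fnmem _ hy]
    · have hxy : x * y ∉ H := fun h => hx (by simpa [mul_assoc] using mul_mem h (inv_mem hy))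
      have hcy : c * y * c⁻¹ ∈ H := (indexTwoNormal H h2).conj_mem y hy c
      calc f (x * y) = φ₀ ⟨x * y * c⁻¹, hmemc _ hxy⟩ * b := fnmem _ hxy
        _ = φ₀ ⟨(x * c⁻¹) * (c * y * c⁻¹), mul_mem (hmemc x hx) hcy⟩ * b :=
            congrArg (· * b) (hφcongr _ _ _ _ (by group))
        _ = φ₀ ⟨x * c⁻¹, hmemc x hx⟩ * φ₀ ⟨c * y * c⁻¹, hcy⟩ * b :=
            congrArg (· * b) (hφmul _ _ _ _)
        _ = φ₀ ⟨x * c⁻¹, hmemc x hx⟩ * (φ₀ ⟨c * y * c⁻¹, hcy⟩ * b) := mul_assoc _ _ _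
        _ = φ₀ ⟨x * c⁻¹, hmemc x hx⟩ * (b * φ₀ ⟨y, hy⟩) :=
            congrArg (φ₀ ⟨x * c⁻¹, hmemc x hx⟩ * ·) (hconj y hy).symm
        _ = (φ₀ ⟨x * c⁻¹, hmemc x hx⟩ * b) * φ₀ ⟨y, hy⟩ := (mul_assoc _ _ _).symm
        _ = f x * f y := by rw [fnmem _ hx, fmem _ hy]
    · have hxy : x * y ∈ H := by
        rw [Subgroup.mul_mem_iff_of_index_two h2]
        exact ⟨fun h => absurd h hx, fun h => absurd h hy⟩
      have hcy : c * (y * c⁻¹) * c⁻¹ ∈ H := (indexTwoNormal H h2).conj_mem _ (hmemc y hy) c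
      have hsq := Subgroup.sq_mem_of_index_two h2 c
      calc f (x * y) = φ₀ ⟨x * y, hxy⟩ := fmem _ hxy
        _ = φ₀ ⟨(x * c⁻¹) * (c * (y * c⁻¹) * c⁻¹) * c ^ 2,
              mul_mem (mul_mem (hmemc x hx) hcy) hsq⟩ := hφcongr _ _ _ _ (by group)
        _ = φ₀ ⟨(x * c⁻¹) * (c * (y * c⁻¹) * c⁻¹), mul_mem (hmemc x hx) hcy⟩ *
              φ₀ ⟨c ^ 2, hsq⟩ := hφmul _ _ _ _
        _ = φ₀ ⟨x * c⁻¹, hmemc x hx⟩ * φ₀ ⟨c * (y * c⁻¹) * c⁻¹, hcy⟩ * φ₀ ⟨c ^ 2, hsq⟩ :=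
            congrArg (· * φ₀ ⟨c ^ 2, hsq⟩) (hφmul _ _ _ _)
        _ = φ₀ ⟨x * c⁻¹, hmemc x hx⟩ * φ₀ ⟨c * (y * c⁻¹) * c⁻¹, hcy⟩ * (b * b) :=
            congrArg (φ₀ ⟨x * c⁻¹, hmemc x hx⟩ * φ₀ ⟨c * (y * c⁻¹) * c⁻¹, hcy⟩ * ·) hbsq.symm
        _ = φ₀ ⟨x * c⁻¹, hmemc x hx⟩ * (φ₀ ⟨c * (y * c⁻¹) * c⁻¹, hcy⟩ * b) * b := by group
        _ = φ₀ ⟨x * c⁻¹, hmemc x hx⟩ * (b * φ₀ ⟨y * c⁻¹, hmemc y hy⟩) * b :=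
            congrArg (fun u => φ₀ ⟨x * c⁻¹, hmemc x hx⟩ * u * b) (hconj _ (hmemc y hy)).symm
        _ = (φ₀ ⟨x * c⁻¹, hmemc x hx⟩ * b) * (φ₀ ⟨y * c⁻¹, hmemc y hy⟩ * b) := by group
        _ = f x * f y := by rw [fnmem _ hx, fnmem _ hy]
  refine ⟨{ toFun := f, map_one' := ?_, map_mul' := fmul }, fmem, ?_⟩
  · exact (fmem 1 (one_mem H)).trans (map_one φ₀)
  · show f c = g * t⁻¹
    calc f c = φ₀ ⟨c * c⁻¹, hmemc c hc⟩ * b := fnmem c hc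
      _ = φ₀ ⟨1, one_mem H⟩ * b := congrArg (· * b) (hφcongr _ _ _ _ (mul_inv_cancel c))
      _ = 1 * b := congrArg (· * b) (map_one φ₀)
      _ = g * t⁻¹ := one_mul b
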